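/- Let χ be an infinite cardinal, let I be a set with |I| ≥ χ, let T be a set, let f : I → T be a function, and let P be a family of subsets of I such that: (i) every S ∈ P satisfies |I \ S| < χ, and (ii) every S ∈ P is f-invariant, i.e. if b ∈ S, b' ∈ I and f(b') = f(b), then b' ∈ S. If |I| > χ + min(|P|, |T|) (cardinal addition and minimum), then there exists b ∈ I with b ∈ S for every S ∈ P. -/
import Mathlib


universe u

/-- Combinatorial content of Lemma `average-realize`: if `|I| ≥ χ`, every `S ∈ P`
has complement of size `< χ` and is invariant under `f`, and
`|I| > χ + min(|P|, |T|)`, then some `b ∈ I` lies in every `S ∈ P`. -/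
theorem stmt_2 {I T : Type u} (χ : Cardinal.{u}) (hχ : Cardinal.aleph0 ≤ χ)
    (f : I → T) (P : Set (Set I))
    (hIχ : χ ≤ Cardinal.mk I)
    (hcompl : ∀ S ∈ P, Cardinal.mk ↥Sᶜ < χ)
    (hinv : ∀ S ∈ P, ∀ b ∈ S, ∀ b' : I, f b' = f b → b' ∈ S)
    (hbig : χ + min (Cardinal.mk ↥P) (Cardinal.mk T) < Cardinal.mk I) :
    ∃ b : I, ∀ S ∈ P, b ∈ S := by
  have hIne : Nonempty I := Cardinal.mk_ne_zero_iff.mp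
    (lt_of_lt_of_le Cardinal.aleph0_pos (hχ.trans hIχ)).ne'
  by_cases hPemp : P = ∅
  · exact ⟨Classical.arbitrary I, by simp [hPemp]⟩
  have hPne : Nonempty ↥P := Set.nonempty_coe_sort.mpr (Set.nonempty_iff_ne_empty.mpr hPemp)
  have hTne : Nonempty T := ⟨f (Classical.arbitrary I)⟩
  set B : Set I := {b : I | ∃ S ∈ P, b ∉ S} with hBdef
  have key : ∀ c : Cardinal.{u}, c ≤ min (Cardinal.mk ↥P) (Cardinal.mk T) →
      Cardinal.mk ↥B ≤ c * χ → Cardinal.mk ↥B < Cardinal.mk I := by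
    intro c hc hle
    refine lt_of_le_of_lt (hle.trans ?_) hbig
    calc c * χ ≤ max (max c χ) Cardinal.aleph0 := Cardinal.mul_le_max c χ
      _ ≤ χ + min (Cardinal.mk ↥P) (Cardinal.mk T) := by
          refine max_le (max_le ?_ ?_) ?_
          · exact hc.trans le_add_self
          · exact self_le_add_right _ _
          · exact hχ.trans (self_le_add_right _ _)
  have hBsmall : Cardinal.mk ↥B < Cardinal.mk I := by
    rcases le_total (Cardinal.mk ↥P) (Cardinal.mk T) with hPT | hTP
    · apply key (Cardinal.mk ↥P) (le_min le_rfl hPT)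
      have hsub : B ⊆ ⋃ S : P, ((S : Set I)ᶜ) := by
        rintro b ⟨S, hS, hbS⟩
        exact Set.mem_iUnion.2 ⟨⟨S, hS⟩, hbS⟩
      have h1 := Cardinal.mk_iUnion_le (fun S : P => ((S : Set I)ᶜ))
      have h2 : (⨆ S : P, Cardinal.mk ↥((S : Set I)ᶜ)) ≤ χ :=
        ciSup_le' fun S => (hcompl S.1 S.2).le
      exact (Cardinal.mk_le_mk_of_subset hsub).trans (h1.trans (mul_le_mul_right h2 _))
    · apply key (Cardinal.mk T) (le_min hTP le_rfl)
      have hsub : B ⊆ ⋃ t : T, (f ⁻¹' {t} ∩ B) := fun b hb =>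
        Set.mem_iUnion.2 ⟨f b, rfl, hb⟩
      have hfib : ∀ t : T, Cardinal.mk ↥(f ⁻¹' {t} ∩ B) ≤ χ := by
        intro t
        by_cases hn : (f ⁻¹' {t} ∩ B).Nonempty
        · obtain ⟨b, hbt, S, hS, hbS⟩ := hn
          have hss : f ⁻¹' {t} ∩ B ⊆ Sᶜ := by
            rintro b' ⟨hb't, -⟩ hb'S
            exact hbS (hinv S hS b' hb'S b (hbt.trans hb't.symm))
          exact (Cardinal.mk_le_mk_of_subset hss).trans (hcompl S hS).le
        · rw [Set.not_nonempty_iff_eq_empty.mp hn]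
          simp
      have h1 := Cardinal.mk_iUnion_le (fun t : T => (f ⁻¹' {t} ∩ B))
      have h2 : (⨆ t : T, Cardinal.mk ↥(f ⁻¹' {t} ∩ B)) ≤ χ := ciSup_le' hfib
      exact (Cardinal.mk_le_mk_of_subset hsub).trans (h1.trans (mul_le_mul_right h2 _))
  have hne : B ≠ Set.univ := by
    intro h
    rw [h] at hBsmall
    simp at hBsmall
  obtain ⟨b, hb⟩ := (Set.ne_univ_iff_exists_notMem (s := B)).mp hne
  exact ⟨b, fun S hS => by_contra fun h => hb ⟨S, hS, h⟩⟩
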